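/- For every σ > 0 and all indices i, j, the centered isotropic Gaussian measure μ_σ on ℝ^P assigns equal mass to all Voronoï cells of the unit P-simplex vertices: μ_σ(B_i) = μ_σ(B_j). -/

import Mathlib

open scoped BigOperators RealInnerProductSpace
open MeasureTheory
set_option maxHeartbeats 1000000

/-- The all-ones vector in `ℝ^P`. -/
noncomputable def onesVec (P : ℕ) : EuclideanSpace ℝ (Fin P) :=
  (WithLp.equiv 2 (Fin P → ℝ)).symm fun _ => 1

/-- The vertices of the unit `P`-simplex: for `j < P`,
`v_j = √((P+1)/P) • e_j − ((√(P+1) − 1)/(P√P)) • 𝟏`, and `v_{P+1} = −(1/√P) • 𝟏`. -/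
noncomputable def simplexVertex (P : ℕ) (j : Fin (P + 1)) : EuclideanSpace ℝ (Fin P) :=
  if h : (j : ℕ) < P then
    Real.sqrt ((P + 1) / P) • EuclideanSpace.single ⟨(j : ℕ), h⟩ (1 : ℝ)
      - ((Real.sqrt (P + 1) - 1) / (P * Real.sqrt P)) • onesVec P
  else
    (-1 / Real.sqrt P) • onesVec P

/-- The Voronoï cell of the `k`-th simplex vertex:
`B_k = {z : ‖z − v_k‖ ≤ ‖z − v_i‖ for all i}`. -/
def voronoiCell (P : ℕ) (k : Fin (P + 1)) : Set (EuclideanSpace ℝ (Fin P)) :=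
  {z | ∀ i : Fin (P + 1), ‖z - simplexVertex P k‖ ≤ ‖z - simplexVertex P i‖}


/-- The centered isotropic Gaussian measure on `ℝ^P` with variance `σ²`, given by the density
`(2πσ²)^{−P/2} exp(−‖z‖²/(2σ²))` with respect to Lebesgue measure. -/
noncomputable def gaussianMeasure (P : ℕ) (σ : ℝ) :
    MeasureTheory.Measure (EuclideanSpace ℝ (Fin P)) :=
  MeasureTheory.volume.withDensity fun z =>
    ENNReal.ofReal ((2 * Real.pi * σ ^ 2) ^ (-(P : ℝ) / 2) * Real.exp (-‖z‖ ^ 2 / (2 * σ ^ 2)))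

lemma inner_ones_ones (P : ℕ) : ⟪onesVec P, onesVec P⟫ = (P : ℝ) := by
  simp [onesVec, PiLp.inner_apply, RCLike.inner_apply, PiLp.toLp_apply, EuclideanSpace.norm_eq, Real.sq_sqrt]

lemma inner_single_ones (P : ℕ) (m : Fin P) :
    ⟪EuclideanSpace.single m (1:ℝ), onesVec P⟫ = 1 := by
  simp [onesVec, EuclideanSpace.inner_single_left, PiLp.toLp_apply]

lemma inner_ones_single (P : ℕ) (m : Fin P) :
    ⟪onesVec P, EuclideanSpace.single m (1:ℝ)⟫ = 1 := by
  rw [real_inner_comm]; exact inner_single_ones P m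

lemma inner_single_single (P : ℕ) (m m' : Fin P) :
    ⟪EuclideanSpace.single m (1:ℝ), EuclideanSpace.single m' (1:ℝ)⟫
      = if m = m' then 1 else 0 := by
  simp [EuclideanSpace.inner_single_left, EuclideanSpace.single_apply, eq_comm]

lemma gram (P : ℕ) (hP : 1 ≤ P) (k l : Fin (P + 1)) :
    ⟪simplexVertex P k, simplexVertex P l⟫ = if k = l then 1 else -1 / (P : ℝ) := by
  have hP0 : (0:ℝ) < P := by exact_mod_cast hP
  have ha : Real.sqrt (((P:ℝ) + 1) / P) = Real.sqrt ((P:ℝ)+1) / Real.sqrt (P:ℝ) :=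
    Real.sqrt_div (by positivity) _
  by_cases hk : (k : ℕ) < P <;> by_cases hl : (l : ℕ) < P
  · simp only [simplexVertex, dif_pos hk, dif_pos hl, inner_sub_left, inner_sub_right,
      real_inner_smul_left, real_inner_smul_right, inner_single_single, inner_single_ones,
      inner_ones_single, inner_ones_ones, ha]
    set s := Real.sqrt ((P:ℝ)+1) with hs_def
    set t := Real.sqrt (P:ℝ) with ht_def
    have hs : s ^ 2 = P + 1 := Real.sq_sqrt (by positivity)
    have ht : t ^ 2 = P := Real.sq_sqrt (by positivity)
    have ht0 : (0:ℝ) < t := Real.sqrt_pos.2 hP0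
    clear_value s t
    by_cases hkl : k = l
    · have : (⟨(k:ℕ), hk⟩ : Fin P) = ⟨(l:ℕ), hl⟩ := by subst hkl; rfl
      rw [if_pos this, if_pos hkl]
      field_simp
      linear_combination (-1 + (P:ℝ)) * hs + (-(P:ℝ)) * ht
    · have : (⟨(k:ℕ), hk⟩ : Fin P) ≠ ⟨(l:ℕ), hl⟩ := by
        intro h; exact hkl (Fin.ext (by simpa [Fin.mk.injEq] using h))
      rw [if_neg this, if_neg hkl]
      field_simp
      linear_combination (-1 : ℝ) * hs + (1 : ℝ) * ht
  · have hkl : k ≠ l := by intro h; subst h; exact hl hk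
    simp only [simplexVertex, dif_pos hk, dif_neg hl, inner_sub_left,
      real_inner_smul_left, real_inner_smul_right, inner_single_ones, inner_ones_ones, ha,
      if_neg hkl]
    set s := Real.sqrt ((P:ℝ)+1) with hs_def
    set t := Real.sqrt (P:ℝ) with ht_def
    have hs : s ^ 2 = P + 1 := Real.sq_sqrt (by positivity)
    have ht : t ^ 2 = P := Real.sq_sqrt (by positivity)
    have ht0 : (0:ℝ) < t := Real.sqrt_pos.2 hP0
    clear_value s t
    field_simp
    linear_combination (1 : ℝ) * ht
  · have hkl : k ≠ l := by intro h; subst h; exact hk hl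
    simp only [simplexVertex, dif_neg hk, dif_pos hl, inner_sub_right,
      real_inner_smul_left, real_inner_smul_right, inner_ones_single, inner_ones_ones, ha,
      if_neg hkl]
    set s := Real.sqrt ((P:ℝ)+1) with hs_def
    set t := Real.sqrt (P:ℝ) with ht_def
    have hs : s ^ 2 = P + 1 := Real.sq_sqrt (by positivity)
    have ht : t ^ 2 = P := Real.sq_sqrt (by positivity)
    have ht0 : (0:ℝ) < t := Real.sqrt_pos.2 hP0
    clear_value s t
    field_simp
    linear_combination (1 : ℝ) * ht
  · have : k = l := Fin.ext (by omega)
    simp only [simplexVertex, dif_neg hk, dif_neg hl, if_pos this,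
      real_inner_smul_left, real_inner_smul_right, inner_ones_ones]
    set t := Real.sqrt (P:ℝ) with ht_def
    have ht : t ^ 2 = P := Real.sq_sqrt (by positivity)
    have ht0 : (0:ℝ) < t := Real.sqrt_pos.2 hP0
    clear_value t
    field_simp
    linear_combination (-1 : ℝ) * ht

lemma norm_simplexVertex (P : ℕ) (hP : 1 ≤ P) (k : Fin (P + 1)) :
    ‖simplexVertex P k‖ = 1 := by
  have h := gram P hP k k
  rw [if_pos rfl] at h
  have h2 : ⟪simplexVertex P k, simplexVertex P k⟫ = ‖simplexVertex P k‖ ^ 2 :=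
    real_inner_self_eq_norm_sq _
  nlinarith [norm_nonneg (simplexVertex P k)]

lemma reflect_vertex (P : ℕ) (hP : 1 ≤ P) (i j : Fin (P + 1)) (hij : i ≠ j) (k : Fin (P + 1)) :
    (Submodule.reflection (ℝ ∙ (simplexVertex P i - simplexVertex P j))ᗮ) (simplexVertex P k)
      = simplexVertex P (Equiv.swap i j k) := by
  have hnorm : ‖simplexVertex P i‖ = ‖simplexVertex P j‖ := by
    rw [norm_simplexVertex P hP, norm_simplexVertex P hP]
  have hRi : (Submodule.reflection (ℝ ∙ (simplexVertex P i - simplexVertex P j))ᗮ) (simplexVertex P i)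
      = simplexVertex P j := Submodule.reflection_sub hnorm
  rcases eq_or_ne k i with rfl | hki
  · rw [Equiv.swap_apply_left]; exact hRi
  rcases eq_or_ne k j with hkj | hkj
  · rw [hkj, Equiv.swap_apply_right]
    have h2 := congrArg (Submodule.reflection (ℝ ∙ (simplexVertex P i - simplexVertex P j))ᗮ) hRi
    rw [Submodule.reflection_reflection] at h2
    exact h2.symm
  · rw [Equiv.swap_apply_of_ne_of_ne hki hkj]
    apply Submodule.reflection_mem_subspace_eq_self
    rw [Submodule.mem_orthogonal_singleton_iff_inner_left]
    rw [real_inner_comm, inner_sub_left, gram P hP i k, gram P hP j k,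
      if_neg (Ne.symm hki), if_neg (Ne.symm hkj), sub_self]

lemma measurableSet_voronoiCell (P : ℕ) (k : Fin (P + 1)) :
    MeasurableSet (voronoiCell P k) := by
  have : voronoiCell P k
      = ⋂ m, {z : EuclideanSpace ℝ (Fin P) | ‖z - simplexVertex P k‖ ≤ ‖z - simplexVertex P m‖} := by
    ext z; simp [voronoiCell, Set.mem_iInter]
  rw [this]
  exact MeasurableSet.iInter fun m => measurableSet_le
    ((continuous_id.sub continuous_const).norm.measurable)
    ((continuous_id.sub continuous_const).norm.measurable)

lemma gauss_preimage (P : ℕ) (σ : ℝ)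
    (e : EuclideanSpace ℝ (Fin P) ≃ₗᵢ[ℝ] EuclideanSpace ℝ (Fin P))
    (s : Set (EuclideanSpace ℝ (Fin P))) (hs : MeasurableSet s) :
    gaussianMeasure P σ (e ⁻¹' s) = gaussianMeasure P σ s := by
  have hse : MeasurableSet (e ⁻¹' s) := e.continuous.measurable hs
  rw [gaussianMeasure, withDensity_apply _ hse, withDensity_apply _ hs]
  have hemb : MeasurableEmbedding (e : EuclideanSpace ℝ (Fin P) → EuclideanSpace ℝ (Fin P)) :=
    e.toHomeomorph.toMeasurableEquiv.measurableEmbedding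
  have := e.measurePreserving.setLIntegral_comp_preimage_emb hemb
    (fun z => ENNReal.ofReal ((2 * Real.pi * σ ^ 2) ^ (-(P : ℝ) / 2)
      * Real.exp (-‖z‖ ^ 2 / (2 * σ ^ 2)))) s
  simp only [e.norm_map] at this
  exact this


/-- The centered isotropic Gaussian measure assigns equal mass to all Voronoï cells of the
unit `P`-simplex vertices. -/
theorem gaussianMeasure_voronoiCell_eq (P : ℕ) (hP : 1 ≤ P) (σ : ℝ) (hσ : 0 < σ)
    (i j : Fin (P + 1)) :
    gaussianMeasure P σ (voronoiCell P i) = gaussianMeasure P σ (voronoiCell P j) := by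
  rcases eq_or_ne i j with rfl | hij
  · rfl
  set R := Submodule.reflection (ℝ ∙ (simplexVertex P i - simplexVertex P j))ᗮ with hR
  have hRv : ∀ k, R (simplexVertex P k) = simplexVertex P (Equiv.swap i j k) :=
    reflect_vertex P hP i j hij
  have hnorm : ∀ (z : EuclideanSpace ℝ (Fin P)) (k : Fin (P + 1)),
      ‖R z - simplexVertex P (Equiv.swap i j k)‖ = ‖z - simplexVertex P k‖ := by
    intro z k
    rw [← hRv k, ← map_sub, R.norm_map]
  have hpre : voronoiCell P i = R ⁻¹' voronoiCell P j := by
    ext z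
    simp only [voronoiCell, Set.mem_setOf_eq, Set.mem_preimage]
    constructor
    · intro h m
      have h1 := h (Equiv.swap i j m)
      have e1 : ‖R z - simplexVertex P j‖ = ‖z - simplexVertex P i‖ := by
        rw [← Equiv.swap_apply_left i j, hnorm]
      have e2 : ‖R z - simplexVertex P m‖ = ‖z - simplexVertex P (Equiv.swap i j m)‖ := by
        rw [← hnorm z (Equiv.swap i j m), Equiv.swap_apply_self]
      rw [e1, e2]; exact h1
    · intro h m
      have h1 := h (Equiv.swap i j m)
      have e1 : ‖R z - simplexVertex P j‖ = ‖z - simplexVertex P i‖ := by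
        rw [← Equiv.swap_apply_left i j, hnorm]
      have e2 : ‖R z - simplexVertex P (Equiv.swap i j m)‖ = ‖z - simplexVertex P m‖ := by
        rw [← hnorm z m]
      rw [e1, e2] at h1; exact h1
  rw [hpre, gauss_preimage P σ R _ (measurableSet_voronoiCell P j)]
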